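/- arXiv:2404.10532 — 4 statements merged into one kernel-verified Lean document; each statement's English description precedes it below -/
import Mathlib

section
/- Let λ̄ = (λ̄_1 > λ̄_2 > … > λ̄_ℓ) be a distinct partition and λ̄λ̄ its doubled distinct partition. Then one has the multiset identity ℋ(λ̄λ̄) = ℋ(λ̄) ⊎ ℋ(λ̄) ⊎ {2λ̄_1,…,2λ̄_ℓ} ∖ {λ̄_1,…,λ̄_ℓ}, where ⊎ denotes multiset union. -/
open scoped Classical

/-- `p k` is the `(k+1)`-st part `λ_{k+1}` of the partition `λ` :
partitions are encoded by their (eventually zero, antitone) sequence of parts. -/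
def IsPartition (p : ℕ → ℕ) : Prop :=
  Antitone p ∧ ∃ N, ∀ i, N ≤ i → p i = 0

/-- The number of (nonzero) parts of a partition. -/
noncomputable def plen (p : ℕ → ℕ) : ℕ := Nat.card {i : ℕ // p i ≠ 0}

/-- The number of boxes `|λ|` of a partition. -/
noncomputable def psize (p : ℕ → ℕ) : ℕ := ∑ i ∈ Finset.range (plen p), p i

/-- The conjugate partition : `pconj p j = λ^tr_{j+1}`. -/
noncomputable def pconj (p : ℕ → ℕ) (j : ℕ) : ℕ := Nat.card {i : ℕ // j + 1 ≤ p i}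

/-- The size of the Durfee square of a partition. -/
noncomputable def durfee (p : ℕ → ℕ) : ℕ := Nat.card {i : ℕ // i + 1 ≤ p i}

/-- The cells (boxes) of the Young diagram, `0`-indexed : `(i, j)` is the box in
row `i+1` and column `j+1`. -/
noncomputable def cells (p : ℕ → ℕ) : Finset (ℕ × ℕ) :=
  (Finset.range (plen p) ×ˢ Finset.range (p 0)).filter fun s => s.2 < p s.1

/-- The hook length of the (0-indexed) box `(i, j)` :
`h = λ_{i+1} - (j+1) + λ^tr_{j+1} - (i+1) + 1`. -/
noncomputable def hookLen (p : ℕ → ℕ) (i j : ℕ) : ℕ :=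
  (p i - j) + (pconj p j - i) - 1

/-- The multiset of hook lengths `ℋ(λ)`. -/
noncomputable def hooks (p : ℕ → ℕ) : Multiset ℕ :=
  (cells p).val.map fun s => hookLen p s.1 s.2

/-- The multiset of hook lengths of the boxes strictly above the main diagonal. -/
noncomputable def hooksAbove (p : ℕ → ℕ) : Multiset ℕ :=
  ((cells p).filter fun s => s.1 < s.2).val.map fun s => hookLen p s.1 s.2

/-- The multiset of hook lengths of the boxes strictly below the main diagonal. -/
noncomputable def hooksBelow (p : ℕ → ℕ) : Multiset ℕ :=
  ((cells p).filter fun s => s.2 < s.1).val.map fun s => hookLen p s.1 s.2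

/-- `p` is an `n`-core : no hook length is equal to `n`. -/
def IsCore (n : ℕ) (p : ℕ → ℕ) : Prop := n ∉ hooks p

/-- Self-conjugate partitions. -/
def SelfConj (p : ℕ → ℕ) : Prop := p = pconj p

/-- Distinct partitions (strictly decreasing nonzero parts). -/
def IsDistinct (p : ℕ → ℕ) : Prop := ∀ i, p (i + 1) ≠ 0 → p (i + 1) < p i

/-- Doubled distinct partitions : `λ_i = λ^tr_i + 1` for `i` at most
the size of the Durfee square. -/
def IsDD (p : ℕ → ℕ) : Prop := ∀ i < durfee p, p i = pconj p i + 1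

/-- Conjugates of doubled distinct partitions. -/
def IsDDtr (p : ℕ → ℕ) : Prop := ∃ q, IsPartition q ∧ IsDD q ∧ p = pconj q

/-- The doubled distinct partition `λ̄λ̄` of a distinct partition `λ̄` :
add `λ̄_i` boxes to the `i`-th column of the shifted Young diagram of `λ̄`. -/
noncomputable def double (b : ℕ → ℕ) : ℕ → ℕ := fun i =>
  if i < plen b then b i + (i + 1)
  else Nat.card {j : ℕ // j < plen b ∧ i + 1 ≤ b j + j}

/-- The self-conjugate partition associated with a distinct partition `λ̄` :
add `λ̄_i - 1` boxes to the `i`-th column of the shifted Young diagram of `λ̄`. -/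
noncomputable def scOf (b : ℕ → ℕ) : ℕ → ℕ := fun i =>
  if i < plen b then b i + i
  else Nat.card {j : ℕ // j < plen b ∧ i + 1 ≤ b j + j}

/-- The binary word `ψ(λ) = (c_k)_{k ∈ ℤ}` of a partition :
`c_k = 0` iff `k ∈ {λ_i - i : i ≥ 1}` and `c_k = 1` otherwise
(i.e. iff `k ∈ {j - λ^tr_j - 1 : j ≥ 1}`). -/
noncomputable def word (p : ℕ → ℕ) (k : ℤ) : ℕ :=
  if ∃ m : ℕ, k = (p m : ℤ) - ((m : ℤ) + 1) then 0 else 1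

/-- The `g`-charge of a `g`-core : `m_i = min {k ∈ ℤ : c_{kg+i} = 1}`. -/
noncomputable def ncharge (g : ℕ) (p : ℕ → ℕ) (i : ℕ) : ℤ :=
  sInf {k : ℤ | word p (k * (g : ℤ) + (i : ℤ)) = 1}

/-- The subword of residue `k` modulo `g` of the word of `p`. -/
noncomputable def subword (g k : ℕ) (p : ℕ → ℕ) (i : ℤ) : ℕ :=
  word p ((g : ℤ) * i + (k : ℤ))

/-- The shift turning the subword of residue `k` into a balanced partition word. -/
noncomputable def qcharge (g : ℕ) (p : ℕ → ℕ) (k : ℕ) : ℤ :=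
  (Nat.card {i : ℕ // subword g k p (i : ℤ) = 0} : ℤ) -
    (Nat.card {i : ℕ // subword g k p (-((i : ℤ) + 1)) = 1} : ℤ)

/-- `ν` is the `k`-th component of the `g`-quotient of `p` : its word is the
subword of residue `k` of the word of `p`, reindexed so as to be balanced. -/
def IsQuotientAt (g : ℕ) (p : ℕ → ℕ) (k : ℕ) (ν : ℕ → ℕ) : Prop :=
  ∀ i : ℤ, word ν i = subword g k p (i + qcharge g p k)

/-- `ω` is the `g`-core of `p` : every subword of its word is sorted
(all `0`'s, then all `1`'s), with transition index the charge of `p`. -/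
def IsCoreOf (g : ℕ) (p ω : ℕ → ℕ) : Prop :=
  ∀ k < g, ∀ i : ℤ, (subword g k ω i = 1 ↔ qcharge g p k ≤ i)

/-- `(ω, ν)` is the Littlewood decomposition of `p` for the modulus `g`. -/
def IsLittlewood (g : ℕ) (p ω : ℕ → ℕ) (ν : ℕ → ℕ → ℕ) : Prop :=
  IsCoreOf g p ω ∧ ∀ k < g, IsQuotientAt g p k (ν k)

/-- The number `a_r` of boxes of residue `r` modulo `g`
(the residue of the box `(i, j)` -- `0`-indexed -- being `(j - i) mod g`). -/
noncomputable def resCount (g : ℕ) (p : ℕ → ℕ) (r : ℕ) : ℕ :=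
  ((cells p).filter fun s => ((s.2 : ℤ) - (s.1 : ℤ)) % (g : ℤ) = (r : ℤ)).card

/-- The rectangular partition with `r` rows of length `c`. -/
def rect (r c : ℕ) : ℕ → ℕ := fun i => if i < r then c else 0

/-- The statistic `m = max({1} ∪ {(g + λ̄_i)/g : λ̄_i ≡ 0 (mod g)})`. -/
noncomputable def mStat (g : ℕ) (b : ℕ → ℕ) : ℕ :=
  sSup ({1} ∪ {k : ℕ | ∃ i < plen b, g ∣ b i ∧ k = (g + b i) / g})

/-- The statistic `m' = max({0} ∪ {λ̄_i/g : λ̄_i ≡ g/2 (mod g)})`. -/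
noncomputable def mStat' (g : ℕ) (b : ℕ → ℕ) : ℕ :=
  sSup ({0} ∪ {k : ℕ | ∃ i < plen b, 2 * (b i % g) = g ∧ k = b i / g})

lemma card_eq_of_iff {P : ℕ → Prop} {k : ℕ} (h : ∀ i, P i ↔ i < k) :
    Nat.card {i : ℕ // P i} = k := by
  have h1 : {i : ℕ | P i} = ↑(Finset.range k) := by ext i; simp [h i]
  have h2 : Nat.card {i : ℕ // P i} = ({i : ℕ | P i}).ncard := Nat.card_coe_set_eq _
  rw [h2, h1, Set.ncard_coe_finset, Finset.card_range]

lemma card_lowerset {P : ℕ → Prop} (hdc : ∀ i j, i ≤ j → P j → P i)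
    {N : ℕ} (hN : ∀ i, P i → i < N) (i : ℕ) : P i ↔ i < Nat.card {i : ℕ // P i} := by
  classical
  set S : Finset ℕ := (Finset.range N).filter (fun i => P i) with hS
  have hmem : ∀ j, j ∈ S ↔ P j := by
    intro j; simp only [hS, Finset.mem_filter, Finset.mem_range]
    exact ⟨fun h => h.2, fun h => ⟨hN j h, h⟩⟩
  have hcard : Nat.card {i : ℕ // P i} = S.card := by
    have h1 : {i : ℕ | P i} = ↑S := by ext j; simp [hmem j]
    have h2 : Nat.card {i : ℕ // P i} = ({i : ℕ | P i}).ncard := Nat.card_coe_set_eq _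
    rw [h2, h1, Set.ncard_coe_finset]
  rw [hcard]
  constructor
  · intro hP
    have hsub : Finset.Iic i ⊆ S := fun j hj =>
      (hmem j).mpr (hdc j i (Finset.mem_Iic.mp hj) hP)
    have := Finset.card_le_card hsub
    simpa [Nat.card_Iic] using this
  · intro hlt
    by_contra hP
    have hsub : S ⊆ Finset.range i := by
      intro j hj
      rw [Finset.mem_range]
      by_contra hji
      exact hP (hdc i j (le_of_not_gt hji) ((hmem j).mp hj))
    have := Finset.card_le_card hsub
    simp only [Finset.card_range] at this
    omega

lemma nat_lt_ext {m n : ℕ} (h : ∀ i, i < m ↔ i < n) : m = n := by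
  have := h m; have := h n; omega

section AuxDD
variable {b : ℕ → ℕ} (hb : IsPartition b) (hd : IsDistinct b)

noncomputable def cc (b : ℕ → ℕ) (t : ℕ) : ℕ :=
  Nat.card {j : ℕ // j < plen b ∧ t + 1 ≤ b j + j}

include hb in
lemma hL : ∀ i, b i ≠ 0 ↔ i < plen b := by
  obtain ⟨N, hN⟩ := hb.2
  exact card_lowerset (fun i j hij hj => fun h0 => hj (Nat.le_antisymm (h0 ▸ hb.1 hij) (Nat.zero_le _)))
    (fun i hi => by by_contra h; exact hi (hN i (le_of_not_gt h)))

include hb hd in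
lemma hv : ∀ i j, i ≤ j → j < plen b → b j + j ≤ b i + i := by
  have step : ∀ j, j < plen b → b (j+1) + (j+1) ≤ b j + j := by
    intro j hj
    by_cases h0 : b (j+1) = 0
    · have hbj : b j ≠ 0 := (hL hb j).mpr hj
      omega
    · have := hd j h0; omega
  have key : ∀ d i, i + d < plen b → b (i + d) + (i + d) ≤ b i + i := by
    intro d
    induction d with
    | zero => intro i _; simp
    | succ d ih =>
      intro i hi
      have h1 := step (i + d) (by omega)
      have h2 := ih i (by omega)
      have : i + (d+1) = (i + d) + 1 := by omega
      rw [this]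
      omega
  intro i j hij hj
  have h3 := key (j - i) i (by omega)
  rw [show i + (j - i) = j from by omega] at h3
  exact h3

include hb hd in
lemma hbound : ∀ i, i < plen b → plen b ≤ b i + i := by
  intro i hi
  have h1 := hv hb hd i (plen b - 1) (by omega) (by omega)
  have h2 : b (plen b - 1) ≠ 0 := (hL hb _).mpr (by omega)
  omega

include hb hd in
lemma hc : ∀ t a, (a < plen b ∧ t + 1 ≤ b a + a) ↔ a < cc b t := by
  intro t a
  have := card_lowerset (P := fun a => a < plen b ∧ t + 1 ≤ b a + a)
    (fun i j hij hj => ⟨by omega, le_trans hj.2 (hv hb hd i j hij hj.1)⟩)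
    (fun i hi => hi.1) a
  simpa [cc] using this

include hb hd in
lemma hcle : ∀ t, cc b t ≤ plen b := by
  intro t
  by_contra h
  exact absurd (((hc hb hd t (plen b)).mpr (by omega)).1) (lt_irrefl _)

include hb hd in
lemma hcL : ∀ t, t < plen b → cc b t = plen b := by
  intro t ht
  refine le_antisymm (hcle hb hd t) ?_
  by_contra h
  have h2 := (hc hb hd t (cc b t)).mp ⟨by omega, by have := hbound hb hd (cc b t) (by omega); omega⟩
  omega

lemma hμlt : ∀ i, i < plen b → double b i = b i + i + 1 := by
  intro i hi; simp only [double, if_pos hi]; omega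

lemma hμge : ∀ i, plen b ≤ i → double b i = cc b i := by
  intro i hi; simp only [double, cc, if_neg (Nat.not_lt.mpr hi)]

include hb hd in
lemma hcanti : ∀ t t', t ≤ t' → cc b t' ≤ cc b t := by
  intro t t' htt
  refine le_of_not_gt fun hlt => ?_
  have h1 := (hc hb hd t' (cc b t)).mpr hlt
  have h2 := (hc hb hd t (cc b t)).mp ⟨h1.1, by omega⟩
  omega

include hb hd in
lemma hμanti : Antitone (double b) := by
  apply antitone_nat_of_succ_le
  intro i
  rcases Nat.lt_or_ge (i+1) (plen b) with h | h
  · rw [hμlt (i+1) h, hμlt i (by omega)]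
    have := hv hb hd i (i+1) (by omega) h
    omega
  · rw [hμge _ h]
    rcases Nat.lt_or_ge i (plen b) with h2 | h2
    · rw [hμlt i h2]
      have := hcle hb hd (i+1)
      have := hbound hb hd i h2
      omega
    · rw [hμge _ h2]
      exact hcanti hb hd i (i+1) (by omega)
include hb hd in
lemma hmu0 : ∀ i, double b i ≠ 0 ↔ i < b 0 := by
  intro i
  rcases Nat.lt_or_ge i (plen b) with h | h
  · rw [hμlt i h]
    have h1 := hbound hb hd 0 (by omega)
    constructor
    · intro _; omega
    · intro _; omega
  · rw [hμge i h]
    constructor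
    · intro h0
      have := (hc hb hd i 0).mpr (by omega)
      omega
    · intro h0
      have hL0 : 0 < plen b := by
        by_contra hL0
        have := (hL hb 0).not.mpr (by omega)
        simp at this
        omega
      have := (hc hb hd i 0).mp ⟨hL0, by omega⟩
      omega

include hb hd in
lemma hplenmu : plen (double b) = b 0 := card_eq_of_iff (hmu0 hb hd)

include hb hd in
lemma hpconj : ∀ j i, (j + 1 ≤ double b i) ↔ i < pconj (double b) j := by
  intro j i
  exact card_lowerset (fun i' j' hij hj => le_trans hj ((hμanti hb hd) hij))
    (fun i' hi => by
      have : double b i' ≠ 0 := by omega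
      exact (hmu0 hb hd i').mp this) i

include hb hd in
lemma hconj1 : ∀ j, j < plen b → pconj (double b) j = b j + j := by
  intro j hj
  refine nat_lt_ext fun i => ?_
  rw [← hpconj hb hd j i]
  rcases Nat.lt_or_ge i (plen b) with h | h
  · rw [hμlt i h]
    have h1 := hbound hb hd i h
    have h2 := hbound hb hd j hj
    constructor
    · intro _; omega
    · intro _; omega
  · rw [hμge i h]
    constructor
    · intro h0
      have := (hc hb hd i j).mpr (by omega)
      omega
    · intro h0
      have := (hc hb hd i j).mp ⟨hj, by omega⟩
      omega

include hb hd in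
lemma hconj2 : ∀ j, plen b ≤ j + 1 → pconj (double b) (j + 1) = cc b j := by
  intro j hj
  refine nat_lt_ext fun i => ?_
  rw [← hpconj hb hd (j+1) i]
  rcases Nat.lt_or_ge i (plen b) with h | h
  · rw [hμlt i h]
    rw [← hc hb hd j i]
    constructor
    · intro h0; exact ⟨h, by omega⟩
    · intro h0; omega
  · rw [hμge i h]
    have h1 := hcle hb hd i
    have h2 := hcle hb hd j
    constructor
    · intro h0; omega
    · intro h0; omega

include hb hd in
lemma hcella : ∀ s : ℕ × ℕ, s ∈ cells (double b) ↔ s.2 < double b s.1 := by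
  intro s
  simp only [cells, Finset.mem_filter, Finset.mem_product, Finset.mem_range]
  refine ⟨fun h => h.2, fun h => ⟨⟨?_, ?_⟩, h⟩⟩
  · rw [hplenmu hb hd]
    exact (hmu0 hb hd s.1).mp (by omega)
  · have := (hμanti hb hd) (Nat.zero_le s.1)
    omega
include hb hd in
lemma hdiaghook : ∀ i, i < plen b → hookLen (double b) i i = 2 * b i := by
  intro i hi
  unfold hookLen
  rw [hμlt i hi, hconj1 hb hd i hi]
  omega

include hb hd in
lemma hpconjL (hL0 : 0 < plen b) : pconj (double b) (plen b) = plen b := by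
  have h := hconj2 hb hd (plen b - 1) (by omega)
  rw [show plen b - 1 + 1 = plen b from by omega] at h
  rw [h, hcL hb hd _ (by omega)]

include hb hd in
lemma hhookmid : ∀ i, i < plen b → hookLen (double b) i (plen b) = b i := by
  intro i hi
  unfold hookLen
  rw [hμlt i hi, hpconjL hb hd (by omega)]
  have := hbound hb hd i hi
  omega

include hb hd in
lemma hhookeq1 : ∀ i r, i < r → r < plen b →
    hookLen (double b) r i = hookLen (double b) i r := by
  intro i r hir hr
  unfold hookLen
  rw [hμlt r hr, hμlt i (by omega), hconj1 hb hd i (by omega), hconj1 hb hd r hr]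
  have := hbound hb hd i (by omega)
  have := hbound hb hd r hr
  omega

include hb hd in
lemma hhookeq2 : ∀ t : ℕ × ℕ, t.2 < t.1 → plen b ≤ t.1 → t.2 < double b t.1 →
    hookLen (double b) t.2 (t.1 + 1) = hookLen (double b) t.1 t.2 := by
  intro t h1 h2 h3
  rw [hμge t.1 h2] at h3
  have h4 := (hc hb hd t.1 t.2).mpr h3
  unfold hookLen
  rw [hμlt t.2 h4.1, hconj2 hb hd t.1 (by omega), hμge t.1 h2, hconj1 hb hd t.2 h4.1]
  omega
include hb hd in
lemma Cdiag : (cells (double b)).filter (fun s => ¬ s.1 < s.2 ∧ ¬ s.2 < s.1) =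
    (Finset.range (plen b)).map ⟨fun i => (i, i), id fun a b h => by simpa using (Prod.ext_iff.mp h).1⟩ := by
  ext s
  simp only [Finset.mem_filter, Finset.mem_map, Finset.mem_range, Function.Embedding.coeFn_mk]
  rw [hcella hb hd]
  constructor
  · rintro ⟨h1, h2, h3⟩
    have heq : s.1 = s.2 := by omega
    refine ⟨s.1, ?_, by simp [Prod.ext_iff, heq]⟩
    by_contra h
    rw [hμge s.1 (le_of_not_gt (by have := hcle hb hd s.1; omega))] at h1
    have := hcle hb hd s.1
    omega
  · rintro ⟨i, hi, rfl⟩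
    rw [hμlt i hi]
    omega

include hb hd in
lemma CA1 : (cells (double b)).filter (fun s => s.1 < s.2 ∧ s.2 < plen b) =
    ((cells (double b)).filter (fun s => s.2 < s.1 ∧ s.1 < plen b)).map
      ⟨Prod.swap, Prod.swap_injective⟩ := by
  ext s
  simp only [Finset.mem_filter, Finset.mem_map, Function.Embedding.coeFn_mk]
  constructor
  · rintro ⟨h1, h2, h3⟩
    rw [hcella hb hd] at h1
    refine ⟨(s.2, s.1), ⟨?_, by simpa, by simpa⟩, by simp⟩
    rw [hcella hb hd]
    have hs1 : s.1 < plen b := by omega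
    simp only
    rw [hμlt s.2 h3]
    have := hbound hb hd s.2 h3
    omega
  · rintro ⟨t, ⟨ht1, ht2, ht3⟩, rfl⟩
    rw [hcella hb hd] at ht1 ⊢
    simp only [Prod.fst_swap, Prod.snd_swap]
    have ht22 : t.2 < plen b := by omega
    rw [hμlt t.2 ht22]
    have := hbound hb hd t.2 ht22
    omega

include hb hd in
lemma CA2 : (cells (double b)).filter (fun s => s.1 < s.2 ∧ s.2 = plen b) =
    (Finset.range (plen b)).map ⟨fun i => (i, plen b), id fun a b h => by simpa using (Prod.ext_iff.mp h).1⟩ := by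
  ext s
  simp only [Finset.mem_filter, Finset.mem_map, Finset.mem_range, Function.Embedding.coeFn_mk]
  rw [hcella hb hd]
  constructor
  · rintro ⟨h1, h2, h3⟩
    exact ⟨s.1, by omega, by simp [Prod.ext_iff, h3]⟩
  · rintro ⟨i, hi, rfl⟩
    rw [hμlt i hi]
    have := hbound hb hd i hi
    omega

include hb hd in
lemma CA3 : (cells (double b)).filter (fun s => s.1 < s.2 ∧ plen b < s.2) =
    ((cells (double b)).filter (fun s => s.2 < s.1 ∧ plen b ≤ s.1)).map
      ⟨fun t => (t.2, t.1 + 1), id fun a b h => by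
        have := Prod.ext_iff.mp h
        simp at this
        exact Prod.ext this.2 this.1⟩ := by
  ext s
  simp only [Finset.mem_filter, Finset.mem_map, Function.Embedding.coeFn_mk]
  constructor
  · rintro ⟨h1, h2, h3⟩
    rw [hcella hb hd] at h1
    have hs1 : s.1 < plen b := by
      by_contra h
      rw [hμge s.1 (le_of_not_gt h)] at h1
      have := hcle hb hd s.1
      omega
    rw [hμlt s.1 hs1] at h1
    refine ⟨(s.2 - 1, s.1), ⟨?_, by omega, by omega⟩, by
      simp only
      ext
      · simp
      · simp; omega⟩
    rw [hcella hb hd]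
    simp only
    rw [hμge (s.2 - 1) (by omega)]
    rw [← hc hb hd (s.2 - 1) s.1]
    constructor
    · exact hs1
    · omega
  · rintro ⟨t, ⟨ht1, ht2, ht3⟩, rfl⟩
    rw [hcella hb hd] at ht1 ⊢
    simp only
    rw [hμge t.1 ht3] at ht1
    have h4 := (hc hb hd t.1 t.2).mpr ht1
    rw [hμlt t.2 h4.1]
    omega
include hb hd in
lemma hsplit : hooks (double b) = hooksAbove (double b) + hooksBelow (double b)
    + ((Finset.range (plen b)).val.map fun i => 2 * b i) := by
  classical
  have e0 : (cells (double b)).val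
      = (cells (double b)).val.filter (fun s => s.1 < s.2)
      + ((cells (double b)).val.filter (fun s => ¬ s.1 < s.2)) :=
    (Multiset.filter_add_not _ _).symm
  have e1 : (cells (double b)).val.filter (fun s => ¬ s.1 < s.2) =
      ((cells (double b)).val.filter (fun s => ¬ s.1 < s.2)).filter (fun s => s.2 < s.1)
      + ((cells (double b)).val.filter (fun s => ¬ s.1 < s.2)).filter (fun s => ¬ s.2 < s.1) :=
    (Multiset.filter_add_not _ _).symm
  have e2 : ((cells (double b)).val.filter (fun s => ¬ s.1 < s.2)).filter (fun s => s.2 < s.1)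
      = (cells (double b)).val.filter (fun s => s.2 < s.1) := by
    rw [Multiset.filter_filter]
    exact Multiset.filter_congr (fun x _ => by omega)
  have e3 : ((cells (double b)).val.filter (fun s => ¬ s.1 < s.2)).filter (fun s => ¬ s.2 < s.1)
      = (cells (double b)).val.filter (fun s => ¬ s.1 < s.2 ∧ ¬ s.2 < s.1) := by
    rw [Multiset.filter_filter]
    exact Multiset.filter_congr (fun x _ => by omega)
  have eM : (cells (double b)).val
      = (cells (double b)).val.filter (fun s => s.1 < s.2)
      + ((cells (double b)).val.filter (fun s => s.2 < s.1)
        + (cells (double b)).val.filter (fun s => ¬ s.1 < s.2 ∧ ¬ s.2 < s.1)) := by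
    rw [← e2, ← e3, ← e1, ← e0]
  have ediag : ((cells (double b)).val.filter (fun s => ¬ s.1 < s.2 ∧ ¬ s.2 < s.1)).map
        (fun s => hookLen (double b) s.1 s.2)
      = (Finset.range (plen b)).val.map fun i => 2 * b i := by
    rw [← Finset.filter_val, Cdiag hb hd, Finset.map_val, Multiset.map_map]
    refine Multiset.map_congr rfl (fun i hi => ?_)
    rw [Finset.mem_val, Finset.mem_range] at hi
    simpa using hdiaghook hb hd i hi
  calc hooks (double b)
      = (cells (double b)).val.map (fun s => hookLen (double b) s.1 s.2) := rfl
    _ = ((cells (double b)).val.filter (fun s => s.1 < s.2)).map (fun s => hookLen (double b) s.1 s.2)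
        + (((cells (double b)).val.filter (fun s => s.2 < s.1)).map (fun s => hookLen (double b) s.1 s.2)
          + ((Finset.range (plen b)).val.map fun i => 2 * b i)) := by
        rw [← ediag, ← Multiset.map_add, ← Multiset.map_add, ← eM]
    _ = hooksAbove (double b) + hooksBelow (double b)
        + ((Finset.range (plen b)).val.map fun i => 2 * b i) := by
        rw [hooksAbove, hooksBelow, Finset.filter_val, Finset.filter_val, add_assoc]

include hb hd in
lemma hAB : hooksAbove (double b) = hooksBelow (double b)
    + ((Finset.range (plen b)).val.map fun i => b i) := by
  classical
  have f0 : (cells (double b)).val.filter (fun s => s.1 < s.2)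
      = ((cells (double b)).val.filter (fun s => s.1 < s.2)).filter (fun s => s.2 < plen b)
      + ((cells (double b)).val.filter (fun s => s.1 < s.2)).filter (fun s => ¬ s.2 < plen b) :=
    (Multiset.filter_add_not _ _).symm
  have f1 : ((cells (double b)).val.filter (fun s => s.1 < s.2)).filter (fun s => s.2 < plen b)
      = (cells (double b)).val.filter (fun s => s.1 < s.2 ∧ s.2 < plen b) := by
    rw [Multiset.filter_filter]
    exact Multiset.filter_congr (fun x _ => by omega)
  have g0 : ((cells (double b)).val.filter (fun s => s.1 < s.2)).filter (fun s => ¬ s.2 < plen b)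
      = (((cells (double b)).val.filter (fun s => s.1 < s.2)).filter (fun s => ¬ s.2 < plen b)).filter (fun s => s.2 = plen b)
      + (((cells (double b)).val.filter (fun s => s.1 < s.2)).filter (fun s => ¬ s.2 < plen b)).filter (fun s => ¬ s.2 = plen b) :=
    (Multiset.filter_add_not _ _).symm
  have g1 : (((cells (double b)).val.filter (fun s => s.1 < s.2)).filter (fun s => ¬ s.2 < plen b)).filter (fun s => s.2 = plen b)
      = (cells (double b)).val.filter (fun s => s.1 < s.2 ∧ s.2 = plen b) := by
    rw [Multiset.filter_filter, Multiset.filter_filter]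
    exact Multiset.filter_congr (fun x _ => by omega)
  have g2 : (((cells (double b)).val.filter (fun s => s.1 < s.2)).filter (fun s => ¬ s.2 < plen b)).filter (fun s => ¬ s.2 = plen b)
      = (cells (double b)).val.filter (fun s => s.1 < s.2 ∧ plen b < s.2) := by
    rw [Multiset.filter_filter, Multiset.filter_filter]
    exact Multiset.filter_congr (fun x _ => by omega)
  have a0 : (cells (double b)).val.filter (fun s => s.1 < s.2)
      = (cells (double b)).val.filter (fun s => s.1 < s.2 ∧ s.2 < plen b)
      + ((cells (double b)).val.filter (fun s => s.1 < s.2 ∧ s.2 = plen b)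
        + (cells (double b)).val.filter (fun s => s.1 < s.2 ∧ plen b < s.2)) := by
    rw [← g1, ← g2, ← g0, ← f1, ← f0]
  have k0 : (cells (double b)).val.filter (fun s => s.2 < s.1)
      = ((cells (double b)).val.filter (fun s => s.2 < s.1)).filter (fun s => s.1 < plen b)
      + ((cells (double b)).val.filter (fun s => s.2 < s.1)).filter (fun s => ¬ s.1 < plen b) :=
    (Multiset.filter_add_not _ _).symm
  have k1 : ((cells (double b)).val.filter (fun s => s.2 < s.1)).filter (fun s => s.1 < plen b)
      = (cells (double b)).val.filter (fun s => s.2 < s.1 ∧ s.1 < plen b) := by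
    rw [Multiset.filter_filter]
    exact Multiset.filter_congr (fun x _ => by omega)
  have k2 : ((cells (double b)).val.filter (fun s => s.2 < s.1)).filter (fun s => ¬ s.1 < plen b)
      = (cells (double b)).val.filter (fun s => s.2 < s.1 ∧ plen b ≤ s.1) := by
    rw [Multiset.filter_filter]
    exact Multiset.filter_congr (fun x _ => by omega)
  have b0 : (cells (double b)).val.filter (fun s => s.2 < s.1)
      = (cells (double b)).val.filter (fun s => s.2 < s.1 ∧ s.1 < plen b)
      + (cells (double b)).val.filter (fun s => s.2 < s.1 ∧ plen b ≤ s.1) := by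
    rw [← k1, ← k2, ← k0]
  have p1 : ((cells (double b)).val.filter (fun s => s.1 < s.2 ∧ s.2 < plen b)).map (fun s => hookLen (double b) s.1 s.2)
      = ((cells (double b)).val.filter (fun s => s.2 < s.1 ∧ s.1 < plen b)).map (fun s => hookLen (double b) s.1 s.2) := by
    rw [← Finset.filter_val, CA1 hb hd, Finset.map_val, Multiset.map_map, ← Finset.filter_val]
    refine Multiset.map_congr rfl (fun t ht => ?_)
    rw [Finset.mem_val, Finset.mem_filter] at ht
    obtain ⟨ht0, ht1, ht2⟩ := ht
    simpa using (hhookeq1 hb hd t.2 t.1 ht1 ht2).symm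
  have p2 : ((cells (double b)).val.filter (fun s => s.1 < s.2 ∧ s.2 = plen b)).map (fun s => hookLen (double b) s.1 s.2)
      = (Finset.range (plen b)).val.map fun i => b i := by
    rw [← Finset.filter_val, CA2 hb hd, Finset.map_val, Multiset.map_map]
    refine Multiset.map_congr rfl (fun i hi => ?_)
    rw [Finset.mem_val, Finset.mem_range] at hi
    simpa using hhookmid hb hd i hi
  have p3 : ((cells (double b)).val.filter (fun s => s.1 < s.2 ∧ plen b < s.2)).map (fun s => hookLen (double b) s.1 s.2)
      = ((cells (double b)).val.filter (fun s => s.2 < s.1 ∧ plen b ≤ s.1)).map (fun s => hookLen (double b) s.1 s.2) := by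
    rw [← Finset.filter_val, CA3 hb hd, Finset.map_val, Multiset.map_map, ← Finset.filter_val]
    refine Multiset.map_congr rfl (fun t ht => ?_)
    rw [Finset.mem_val, Finset.mem_filter] at ht
    obtain ⟨ht0, ht1, ht2⟩ := ht
    rw [hcella hb hd] at ht0
    simpa using hhookeq2 hb hd t ht1 ht2 ht0
  have ha : hooksAbove (double b)
      = ((cells (double b)).val.filter (fun s => s.1 < s.2)).map (fun s => hookLen (double b) s.1 s.2) := by
    rw [hooksAbove, Finset.filter_val]
  have hbm : hooksBelow (double b)
      = ((cells (double b)).val.filter (fun s => s.2 < s.1)).map (fun s => hookLen (double b) s.1 s.2) := by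
    rw [hooksBelow, Finset.filter_val]
  rw [ha, hbm, a0, b0, Multiset.map_add, Multiset.map_add, Multiset.map_add, p1, p2, p3]
  abel
end AuxDD

/-- For a distinct partition `λ̄`, the multiset identity
`ℋ(λ̄λ̄) = ℋ(λ̄) ⊎ ℋ(λ̄) ⊎ {2λ̄_1, …, 2λ̄_ℓ} ∖ {λ̄_1, …, λ̄_ℓ}`,
where `ℋ(λ̄)` is the multiset of shifted hook lengths of `λ̄`, i.e. the multiset
of hook lengths of `λ̄λ̄` of the boxes lying strictly above the main diagonal. -/
theorem doubled_distinct_hooks (b : ℕ → ℕ) (hb : IsPartition b) (hd : IsDistinct b) :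
    hooks (double b) =
      hooksAbove (double b) + hooksAbove (double b)
        + ((Finset.range (plen b)).val.map fun i => 2 * b i)
        - ((Finset.range (plen b)).val.map fun i => b i) := by
  have h1 := hsplit hb hd
  have h2 := hAB hb hd
  rw [h1, h2]
  have e : (hooksBelow (double b) + ((Finset.range (plen b)).val.map fun i => b i))
        + (hooksBelow (double b) + ((Finset.range (plen b)).val.map fun i => b i))
        + ((Finset.range (plen b)).val.map fun i => 2 * b i)
      = ((hooksBelow (double b) + ((Finset.range (plen b)).val.map fun i => b i))
          + hooksBelow (double b) + ((Finset.range (plen b)).val.map fun i => 2 * b i))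
        + ((Finset.range (plen b)).val.map fun i => b i) := by abel
  rw [e, add_tsub_cancel_right]
end

section
/- A partition λ is a doubled distinct partition (λ ∈ 𝒟𝒟) if and only if its binary word ψ(λ) = (c_k)_{k∈ℤ} satisfies c_0 = 1 and c_{−k} = 1 − c_k for all integers k ≥ 1. -/
open scoped Classical

lemma lower_mem_iff {S : Set ℕ} (hS : ∀ ⦃a b : ℕ⦄, a ≤ b → b ∈ S → a ∈ S)
    {N : ℕ} (hN : ∀ i ∈ S, i < N) (a : ℕ) : a ∈ S ↔ a < Nat.card S := by
  have hfin : S.Finite := (Set.finite_Iio N).subset fun i hi => hN i hi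
  constructor
  · intro ha
    have h1 : Set.Iic a ⊆ S := fun b hb => hS hb ha
    have := Nat.card_mono hfin h1
    simpa [Nat.card_Iic] using this
  · intro ha
    by_contra hx
    have h2 : S ⊆ Set.Iio a := fun b hb => by
      by_contra hb'
      exact hx (hS (not_lt.1 hb') hb)
    have := Nat.card_mono (Set.finite_Iio a) h2
    simp [Nat.card_Iio] at this
    rw [Nat.card_coe_set_eq] at ha
    omega

lemma pconj_galois {p : ℕ → ℕ} (hp : IsPartition p) (i j : ℕ) :
    i < pconj p j ↔ j < p i := by
  obtain ⟨hmono, N, hN⟩ := hp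
  have : pconj p j = Nat.card {i : ℕ | j + 1 ≤ p i} := rfl
  rw [this]
  have := lower_mem_iff (S := {i : ℕ | j + 1 ≤ p i})
    (fun a b hab hb => le_trans hb (hmono hab))
    (N := N) (fun i hi => by
      by_contra h
      have := hN i (not_lt.1 h)
      simp [Set.mem_setOf_eq, this] at hi) i
  simp only [Set.mem_setOf_eq] at this
  omega

lemma durfee_galois {p : ℕ → ℕ} (hp : IsPartition p) (i : ℕ) :
    i < durfee p ↔ i < p i := by
  obtain ⟨hmono, N, hN⟩ := hp
  have : durfee p = Nat.card {i : ℕ | i + 1 ≤ p i} := rfl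
  rw [this]
  have := lower_mem_iff (S := {i : ℕ | i + 1 ≤ p i})
    (fun a b hab hb => by
      have := hmono hab
      simp only [Set.mem_setOf_eq] at hb ⊢
      omega)
    (N := N) (fun i hi => by
      by_contra h
      have := hN i (not_lt.1 h)
      simp [Set.mem_setOf_eq, this] at hi) i
  simp only [Set.mem_setOf_eq] at this
  omega


lemma exists_boundary {P : ℕ → Prop} (h0 : P 0) (hf : ∃ m, ¬ P m) :
    ∃ a, P a ∧ ¬ P (a + 1) := by
  by_contra h
  push_neg at h
  obtain ⟨m, hm⟩ := hf
  exact hm (Nat.rec h0 (fun n ih => h n ih) m)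

lemma duality {p : ℕ → ℕ} (hp : IsPartition p) (k : ℤ) :
    (∃ m : ℕ, k = (p m : ℤ) - ((m : ℤ) + 1)) ↔ ¬∃ j : ℕ, k = (j : ℤ) - (pconj p j : ℤ) := by
  have gal := pconj_galois hp
  constructor
  · rintro ⟨m, hm⟩ ⟨j, hj⟩
    have key : (p m : ℤ) + (pconj p j : ℤ) = (j : ℤ) + m + 1 := by omega
    by_cases h : j < p m
    · have := (gal m j).2 h
      omega
    · have : ¬ m < pconj p j := fun h' => h ((gal m j).1 h')
      push_neg at h
      omega
  · intro hne
    by_contra hE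
    push_neg at hE hne
    obtain ⟨hmono, N, hN⟩ := hp
    by_cases h0 : k ≤ (p 0 : ℤ) - 1
    · have hfail : ∃ m : ℕ, ¬ (k ≤ (p m : ℤ) - ((m:ℤ) + 1)) := by
        refine ⟨N + (1 + k.natAbs), ?_⟩
        have := hN (N + (1 + k.natAbs)) (by omega)
        rw [this]
        have := neg_abs_le k
        push_cast
        omega
      obtain ⟨a, hPa, hPa1⟩ := exists_boundary (P := fun m => k ≤ (p m : ℤ) - ((m:ℤ) + 1))
        (by push_cast; omega) hfail
      have hstrict : k < (p a : ℤ) - ((a:ℤ) + 1) := by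
        rcases lt_or_eq_of_le hPa with h | h
        · exact h
        · exact absurd h (hE a)
      push_neg at hPa1
      push_cast at hPa1
      have hjnn : 0 ≤ k + (a:ℤ) + 1 := by
        have : (0:ℤ) ≤ p (a+1) := by positivity
        omega
      set jn := (k + (a:ℤ) + 1).toNat with hjn_def
      have hjn : (jn : ℤ) = k + (a:ℤ) + 1 := Int.toNat_of_nonneg hjnn
      have h1 : a < pconj p jn := (gal a jn).2 (by omega)
      have h2 : ¬ (a + 1 < pconj p jn) := fun h' => by
        have := (gal (a+1) jn).1 h'
        push_cast at this
        omega
      have hc : pconj p jn = a + 1 := by omega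
      exact hne jn (by rw [hc]; push_cast; omega)
    · push_neg at h0
      have hk0 : 0 ≤ k := by
        have : (0:ℤ) ≤ p 0 := by positivity
        omega
      set jn := k.toNat with hjn_def
      have hjn : (jn : ℤ) = k := Int.toNat_of_nonneg hk0
      have hc : pconj p jn = 0 := by
        by_contra h
        have : 0 < pconj p jn := Nat.pos_of_ne_zero h
        have := (gal 0 jn).1 this
        omega
      exact hne jn (by rw [hc]; push_cast; omega)

lemma pconj_anti {p : ℕ → ℕ} (hp : IsPartition p) : Antitone (pconj p) := by
  intro j j' hjj'
  by_contra h
  push_neg at h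
  have h1 := (pconj_galois hp (pconj p j) j').1 h
  have h2 : ¬ (pconj p j < pconj p j) := lt_irrefl _
  have h3 : ¬ (j < p (pconj p j)) := fun hc => h2 ((pconj_galois hp _ j).2 hc)
  omega

/-- A partition `λ` is a doubled distinct partition (`λ ∈ 𝒟𝒟`) if and only if
its binary word `ψ(λ) = (c_k)` satisfies `c_0 = 1` and `c_{-k} = 1 - c_k` for
all integers `k ≥ 1`. -/
theorem doubled_distinct_iff_word (p : ℕ → ℕ) (hp : IsPartition p) :
    IsDD p ↔
      (word p 0 = 1 ∧ ∀ k : ℕ, word p (-((k : ℤ) + 1)) = 1 - word p ((k : ℤ) + 1)) := by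
  have gal := pconj_galois hp
  have dur := durfee_galois hp
  have hmono := hp.1
  have hcanti := pconj_anti hp
  set E : ℤ → Prop := fun k => ∃ m : ℕ, k = (p m : ℤ) - ((m : ℤ) + 1) with hE_def
  have hword : ∀ t : ℤ, word p t = if E t then 0 else 1 := fun t => rfl
  have hword1 : ∀ t : ℤ, word p t = 1 ↔ ¬ E t := by
    intro t; rw [hword]; split_ifs with h <;> simp [h]
  -- reduction of RHS
  have hdual : ∀ t : ℤ, ¬ E (-t) ↔ ∃ j : ℕ, t = (pconj p j : ℤ) - (j : ℤ) := by
    intro t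
    have hd := duality hp (-t)
    constructor
    · intro h
      have : ∃ j : ℕ, -t = (j:ℤ) - (pconj p j : ℤ) := by
        by_contra hc
        exact h (hd.2 hc)
      obtain ⟨j, hj⟩ := this
      exact ⟨j, by omega⟩
    · rintro ⟨j, hj⟩ hEt
      exact (hd.1 hEt) ⟨j, by omega⟩
  have hiff : ∀ k : ℕ, (word p (-((k : ℤ) + 1)) = 1 - word p ((k : ℤ) + 1)) ↔
      (E ((k:ℤ)+1) ↔ ¬ E (-((k:ℤ)+1))) := by
    intro k
    rw [hword (-((k:ℤ)+1)), hword ((k:ℤ)+1)]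
    by_cases ha : E ((k:ℤ)+1) <;> by_cases hb : E (-((k:ℤ)+1)) <;>
      simp [ha, hb]
  have hrhs : (word p 0 = 1 ∧ ∀ k : ℕ, word p (-((k : ℤ) + 1)) = 1 - word p ((k : ℤ) + 1))
      ↔ (¬ E 0 ∧ ∀ t : ℤ, 1 ≤ t → (E t ↔ ∃ j : ℕ, t = (pconj p j : ℤ) - (j : ℤ))) := by
    constructor
    · rintro ⟨h0, h1⟩
      refine ⟨(hword1 0).1 h0, ?_⟩
      intro t ht
      obtain ⟨k, rfl⟩ : ∃ k : ℕ, t = (k : ℤ) + 1 := ⟨(t - 1).toNat, by omega⟩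
      rw [← hdual ((k:ℤ)+1)]
      exact (hiff k).1 (h1 k)
    · rintro ⟨h0, h1⟩
      refine ⟨(hword1 0).2 h0, ?_⟩
      intro k
      exact (hiff k).2 ((h1 ((k:ℤ)+1) (by omega)).trans (hdual ((k:ℤ)+1)).symm)
  rw [hrhs]
  constructor
  · -- IsDD → word conditions
    intro hdd
    constructor
    · rintro ⟨m, hm⟩
      have hmlt : m < p m := by omega
      have hmd : m < durfee p := (dur m).2 hmlt
      have := hdd m hmd
      have := (gal m m).2 hmlt
      omega
    · intro t ht
      constructor
      · rintro ⟨m, hm⟩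
        have hmlt : m < p m := by omega
        have hmd : m < durfee p := (dur m).2 hmlt
        have := hdd m hmd
        exact ⟨m, by omega⟩
      · rintro ⟨j, hj⟩
        have hjc : j < pconj p j := by omega
        have hjlt : j < p j := (gal j j).1 hjc
        have hjd : j < durfee p := (dur j).2 hjlt
        have := hdd j hjd
        exact ⟨j, by omega⟩
  · -- word conditions → IsDD
    rintro ⟨h0, h1⟩
    have key : ∀ i, i < durfee p → (p i : ℤ) - (i : ℤ) - 1 = (pconj p i : ℤ) - (i : ℤ) := by
      intro i
      induction i using Nat.strong_induction_on with
      | _ i IH =>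
        intro hi
        have hpi : i < p i := (dur i).1 hi
        have hAi : 1 ≤ (p i : ℤ) - (i : ℤ) - 1 := by
          have hne : ¬ E 0 := h0
          have : p i ≠ i + 1 := fun hc => hne ⟨i, by omega⟩
          omega
        have hci : i < pconj p i := (gal i i).2 hpi
        -- first inequality : p i - i - 1 ≤ pconj p i - i
        have le1 : (p i : ℤ) - (i : ℤ) - 1 ≤ (pconj p i : ℤ) - (i : ℤ) := by
          obtain ⟨j, hj⟩ := (h1 ((p i : ℤ) - i - 1) hAi).1 ⟨i, by omega⟩
          have hjc : j < pconj p j := by omega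
          have hjd : j < durfee p := (dur j).2 ((gal j j).1 hjc)
          have hij : i ≤ j := by
            by_contra hc
            push_neg at hc
            have hBj := IH j hc hjd
            -- p j - j - 1 = pconj p j - j = p i - i - 1, contradicting strict decrease
            have : p i ≤ p j := hmono (le_of_lt hc)
            omega
          have : pconj p j ≤ pconj p i := hcanti hij
          omega
        have hBi : 1 ≤ (pconj p i : ℤ) - (i : ℤ) := by omega
        have le2 : (pconj p i : ℤ) - (i : ℤ) ≤ (p i : ℤ) - (i : ℤ) - 1 := by
          obtain ⟨m, hm⟩ := (h1 ((pconj p i : ℤ) - i) hBi).2 ⟨i, rfl⟩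
          have hmlt : m < p m := by omega
          have hmd : m < durfee p := (dur m).2 hmlt
          have him : i ≤ m := by
            by_contra hc
            push_neg at hc
            have hBm := IH m hc hmd
            have : pconj p i ≤ pconj p m := hcanti (le_of_lt hc)
            omega
          have : p m ≤ p i := hmono him
          omega
        omega
    intro i hi
    have := key i hi
    omega
end

section
/- A partition λ is the conjugate of a doubled distinct partition (λ ∈ 𝒟𝒟^tr) if and only if its binary word ψ(λ) = (c_k)_{k∈ℤ} satisfies c_{−1} = 0 and c_{−k−2} = 1 − c_k for all integers k ≥ 0. -/
open scoped Classical

/-! ### Auxiliary lemmas -/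

lemma downclosed_card {S : Set ℕ} (hfin : S.Finite)
    (hdc : ∀ a b : ℕ, a ≤ b → b ∈ S → a ∈ S) (i : ℕ) : i ∈ S ↔ i < Nat.card S := by
  rw [Nat.card_coe_set_eq, Set.ncard_eq_toFinset_card _ hfin]
  constructor
  · intro hi
    have hsub : Finset.range (i + 1) ⊆ hfin.toFinset := by
      intro x hx
      simp only [Finset.mem_range] at hx
      simpa using hdc x i (by omega) hi
    calc i < i + 1 := Nat.lt_succ_self i
      _ = (Finset.range (i + 1)).card := (Finset.card_range _).symm
      _ ≤ hfin.toFinset.card := Finset.card_le_card hsub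
  · intro hlt
    by_contra hi
    have hsub : hfin.toFinset ⊆ Finset.range i := by
      intro x hx
      simp only [Set.Finite.mem_toFinset] at hx
      simp only [Finset.mem_range]
      by_contra hxi
      exact hi (hdc i x (by omega) hx)
    have := Finset.card_le_card hsub
    simp only [Finset.card_range] at this
    omega

lemma nat_eq_of_forall_lt_iff {a b : ℕ} (h : ∀ i, i < a ↔ i < b) : a = b := by
  rcases lt_trichotomy a b with hab | hab | hab
  · exact absurd ((h a).2 hab) (lt_irrefl a)
  · exact hab
  · exact absurd ((h b).1 hab) (lt_irrefl b)

lemma pconj_lt_iff {p : ℕ → ℕ} (hp : IsPartition p) (i j : ℕ) :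
    i < pconj p j ↔ j + 1 ≤ p i := by
  obtain ⟨N, hN⟩ := hp.2
  have hfin : {i : ℕ | j + 1 ≤ p i}.Finite := by
    apply (Set.finite_Iio N).subset
    intro x hx
    simp only [Set.mem_setOf_eq] at hx
    simp only [Set.mem_Iio]
    by_contra hxN
    have := hN x (by omega)
    omega
  have hdc : ∀ a b : ℕ, a ≤ b → b ∈ {i : ℕ | j + 1 ≤ p i} → a ∈ {i : ℕ | j + 1 ≤ p i} := by
    intro a b hab hb
    simp only [Set.mem_setOf_eq] at *
    exact le_trans hb (hp.1 hab)
  have := (downclosed_card hfin hdc i).symm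
  simpa [pconj, -Nat.card_coe_set_eq, Set.coe_setOf] using this

lemma pconj_partition {p : ℕ → ℕ} (hp : IsPartition p) : IsPartition (pconj p) := by
  constructor
  · intro a b hab
    by_contra hcon
    push_neg at hcon
    have h2 := (pconj_lt_iff hp (pconj p a) b).1 hcon
    have h3 : a + 1 ≤ p (pconj p a) := by omega
    have h4 := (pconj_lt_iff hp (pconj p a) a).2 h3
    omega
  · refine ⟨p 0, fun j hj => ?_⟩
    by_contra hcon
    have h1 : 0 < pconj p j := by omega
    have h2 := (pconj_lt_iff hp 0 j).1 h1
    have h3 := hp.1 (Nat.zero_le 0)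
    omega

lemma pconj_pconj {p : ℕ → ℕ} (hp : IsPartition p) : pconj (pconj p) = p := by
  funext j
  apply nat_eq_of_forall_lt_iff
  intro i
  rw [pconj_lt_iff (pconj_partition hp)]
  exact pconj_lt_iff hp j i

lemma durfee_lt_iff {p : ℕ → ℕ} (hp : IsPartition p) (i : ℕ) :
    i < durfee p ↔ i + 1 ≤ p i := by
  obtain ⟨N, hN⟩ := hp.2
  have hfin : {i : ℕ | i + 1 ≤ p i}.Finite := by
    apply (Set.finite_Iio N).subset
    intro x hx
    simp only [Set.mem_setOf_eq] at hx
    simp only [Set.mem_Iio]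
    by_contra hxN
    have := hN x (by omega)
    omega
  have hdc : ∀ a b : ℕ, a ≤ b → b ∈ {i : ℕ | i + 1 ≤ p i} → a ∈ {i : ℕ | i + 1 ≤ p i} := by
    intro a b hab hb
    simp only [Set.mem_setOf_eq] at *
    have := hp.1 hab
    omega
  have := (downclosed_card hfin hdc i).symm
  simpa [durfee, -Nat.card_coe_set_eq, Set.coe_setOf] using this

lemma durfee_pconj {p : ℕ → ℕ} (hp : IsPartition p) : durfee (pconj p) = durfee p := by
  apply nat_eq_of_forall_lt_iff
  intro i
  rw [durfee_lt_iff (pconj_partition hp), durfee_lt_iff hp, ← pconj_lt_iff hp i i]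
  omega

/-- The set of "bead positions" (shifted by one) of the word of `p`. -/
def Abead (p : ℕ → ℕ) (t : ℤ) : Prop := ∃ m : ℕ, (p m : ℤ) - m = t

lemma word_eq_zero_iff {p : ℕ → ℕ} (k : ℤ) : word p k = 0 ↔ Abead p (k + 1) := by
  unfold word
  split_ifs with h
  · simp only [true_iff]
    obtain ⟨m, hm⟩ := h
    exact ⟨m, by omega⟩
  · simp only [one_ne_zero, false_iff]
    rintro ⟨m, hm⟩
    exact h ⟨m, by omega⟩

lemma word_eq_one_iff {p : ℕ → ℕ} (k : ℤ) : word p k = 1 ↔ ¬ Abead p (k + 1) := by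
  unfold word
  split_ifs with h
  · simp only [zero_ne_one, false_iff, not_not]
    obtain ⟨m, hm⟩ := h
    exact ⟨m, by omega⟩
  · simp only [true_iff]
    rintro ⟨m, hm⟩
    exact h ⟨m, by omega⟩

lemma word_zero_or_one (p : ℕ → ℕ) (k : ℤ) : word p k = 0 ∨ word p k = 1 := by
  unfold word
  split_ifs <;> simp

/-- The key duality : `t` is a bead position of `p` iff `1 - t` is not one of `pconj p`. -/
lemma Abead_pconj_iff {p : ℕ → ℕ} (hp : IsPartition p) (t : ℤ) :
    Abead (pconj p) t ↔ ¬ Abead p (1 - t) := by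
  constructor
  · rintro ⟨j, hj⟩ ⟨m, hm⟩
    by_cases hc : j + 1 ≤ p m
    · have h1 := (pconj_lt_iff hp m j).2 hc
      have h2 : (m : ℤ) < (pconj p j : ℤ) := by exact_mod_cast h1
      omega
    · have h1 : ¬ (m < pconj p j) := fun h => hc ((pconj_lt_iff hp m j).1 h)
      have h2 : (pconj p j : ℤ) ≤ (m : ℤ) := by
        have := Nat.le_of_not_lt h1
        exact_mod_cast this
      omega
  · intro hA
    obtain ⟨N, hN⟩ := hp.2
    set S : Set ℕ := {m | (m : ℤ) + 1 - t ≤ (p m : ℤ)} with hS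
    have hfin : S.Finite := by
      apply (Set.finite_Iio (((p 0 : ℤ) + t).toNat)).subset
      intro x hx
      simp only [hS, Set.mem_setOf_eq] at hx
      have hx0 : (p x : ℤ) ≤ (p 0 : ℤ) := by exact_mod_cast hp.1 (Nat.zero_le x)
      simp only [Set.mem_Iio]
      have : (x : ℤ) < (p 0 : ℤ) + t := by omega
      omega
    have hdc : ∀ a b : ℕ, a ≤ b → b ∈ S → a ∈ S := by
      intro a b hab hb
      simp only [hS, Set.mem_setOf_eq] at *
      have : (p b : ℤ) ≤ (p a : ℤ) := by exact_mod_cast hp.1 hab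
      omega
    set n := Nat.card S with hn
    have hmem : ∀ i, i ∈ S ↔ i < n := downclosed_card hfin hdc
    have hpn : (p n : ℤ) ≤ (n : ℤ) - t := by
      have h1 : n ∉ S := fun h => lt_irrefl n ((hmem n).1 h)
      simp only [hS, Set.mem_setOf_eq] at h1
      omega
    have hnt : t ≤ (n : ℤ) := by
      by_cases ht : t ≤ 0
      · omega
      · have h1 : (t - 1).toNat ∈ S := by
          simp only [hS, Set.mem_setOf_eq]
          have : ((t - 1).toNat : ℤ) = t - 1 := by omega
          omega
        have := (hmem _).1 h1
        omega
    set j : ℕ := ((n : ℤ) - t).toNat with hj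
    have hjz : (j : ℤ) = (n : ℤ) - t := by omega
    have key : ∀ i, i < pconj p j ↔ i < n := by
      intro i
      rw [pconj_lt_iff hp]
      constructor
      · intro h
        by_contra hcon
        have hni : n ≤ i := by omega
        have h1 : (p i : ℤ) ≤ (p n : ℤ) := by exact_mod_cast hp.1 hni
        have h2 : (j : ℤ) + 1 ≤ (p i : ℤ) := by exact_mod_cast h
        omega
      · intro h
        have hn1 : n - 1 ∈ S := (hmem _).2 (by omega)
        simp only [hS, Set.mem_setOf_eq] at hn1
        have hne : (p (n - 1) : ℤ) - ((n : ℤ) - 1) ≠ 1 - t := by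
          intro hcon
          apply hA
          refine ⟨n - 1, ?_⟩
          have : ((n - 1 : ℕ) : ℤ) = (n : ℤ) - 1 := by omega
          omega
        have hcast : ((n - 1 : ℕ) : ℤ) = (n : ℤ) - 1 := by omega
        have h1 : (p (n - 1) : ℤ) ≤ (p i : ℤ) := by
          exact_mod_cast hp.1 (show i ≤ n - 1 by omega)
        omega
    have hval : pconj p j = n := nat_eq_of_forall_lt_iff key
    exact ⟨j, by rw [hval]; omega⟩

lemma match_aux {f g : ℕ → ℤ} (hf : StrictAnti f) (hg : StrictAnti g) (d : ℕ)
    (h1 : ∀ i < d, ∃ j < d, g j = f i) (h2 : ∀ j < d, ∃ i < d, f i = g j) :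
    ∀ i < d, f i = g i := by
  intro i
  induction i using Nat.strong_induction_on with
  | _ i IH =>
    intro hid
    obtain ⟨j, hjd, hgj⟩ := h1 i hid
    rcases lt_trichotomy j i with hji | rfl | hij
    · have hIH := IH j hji (lt_trans hji hid)
      have : f i < f j := hf hji
      rw [hIH] at this
      omega
    · exact hgj.symm
    · obtain ⟨i', hi'd, hfi'⟩ := h2 i hid
      rcases lt_or_ge i' i with h' | h'
      · have hIH := IH i' h' (h'.trans hid)
        have : g i < g i' := hg h'
        rw [← hIH, hfi'] at this
        omega
      · have ha : f i' ≤ f i := hf.antitone h'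
        have hb : g j < g i := hg hij
        omega

/-- A partition `λ` is the conjugate of a doubled distinct partition
(`λ ∈ 𝒟𝒟^tr`) if and only if its binary word `ψ(λ) = (c_k)` satisfies
`c_{-1} = 0` and `c_{-k-2} = 1 - c_k` for all integers `k ≥ 0`. -/
theorem conj_doubled_distinct_iff_word (p : ℕ → ℕ) (hp : IsPartition p) :
    IsDDtr p ↔
      (word p (-1) = 0 ∧ ∀ k : ℕ, word p (-(k : ℤ) - 2) = 1 - word p (k : ℤ)) := by
  -- First, restate the right-hand side in terms of bead positions.
  have hRHS : (word p (-1) = 0 ∧ ∀ k : ℕ, word p (-(k : ℤ) - 2) = 1 - word p (k : ℤ)) ↔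
      (Abead p 0 ∧ ∀ r : ℕ, (Abead p (-(r : ℤ) - 1) ↔ ¬ Abead p ((r : ℤ) + 1))) := by
    constructor
    · rintro ⟨h0, hk⟩
      refine ⟨by simpa using (word_eq_zero_iff (p := p) (-1)).1 h0, fun r => ?_⟩
      have h2 := hk r
      rcases word_zero_or_one p (r : ℤ) with hw | hw
      · rw [hw] at h2
        have ha := (word_eq_zero_iff (p := p) (r : ℤ)).1 hw
        have hb := (word_eq_one_iff (p := p) (-(r : ℤ) - 2)).1 h2
        constructor
        · intro hc
          rw [show -(r : ℤ) - 2 + 1 = -(r : ℤ) - 1 by ring] at hb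
          exact absurd hc hb
        · intro hc
          exact absurd ha hc
      · rw [hw] at h2
        norm_num at h2
        have hb := (word_eq_zero_iff (p := p) (-(r : ℤ) - 2)).1 h2
        have ha := (word_eq_one_iff (p := p) (r : ℤ)).1 hw
        constructor
        · intro _; exact ha
        · intro _
          rw [show -(r : ℤ) - 1 = -(r : ℤ) - 2 + 1 by ring]
          exact hb
    · rintro ⟨h0, hk⟩
      refine ⟨(word_eq_zero_iff (p := p) (-1)).2 (by simpa using h0), fun r => ?_⟩
      rcases word_zero_or_one p (r : ℤ) with hw | hw
      · have ha := (word_eq_zero_iff (p := p) (r : ℤ)).1 hw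
        have hb : ¬ Abead p (-(r : ℤ) - 2 + 1) := by
          intro hc
          rw [show -(r : ℤ) - 2 + 1 = -(r : ℤ) - 1 by ring] at hc
          exact ((hk r).1 hc) ha
        rw [hw, (word_eq_one_iff (p := p) (-(r : ℤ) - 2)).2 hb]
      · have ha := (word_eq_one_iff (p := p) (r : ℤ)).1 hw
        have hb : Abead p (-(r : ℤ) - 2 + 1) := by
          rw [show -(r : ℤ) - 2 + 1 = -(r : ℤ) - 1 by ring]
          exact (hk r).2 ha
        rw [hw, (word_eq_zero_iff (p := p) (-(r : ℤ) - 2)).2 hb]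
  rw [hRHS]
  constructor
  · -- Forward direction
    rintro ⟨q, hq, hDD, rfl⟩
    have hqq := pconj_pconj hq
    have hdq := durfee_pconj hq
    have hA1 : ¬ Abead q 1 := by
      rintro ⟨m, hm⟩
      have h1 : m + 1 ≤ q m := by omega
      have h2 : m < durfee q := (durfee_lt_iff hq m).2 h1
      have h3 := hDD m h2
      have h4 : m < durfee (pconj q) := by omega
      have h5 := (durfee_lt_iff (pconj_partition hq) m).1 h4
      omega
    have hequiv : ∀ t : ℤ, 2 ≤ t → (Abead q t ↔ Abead (pconj q) (t - 1)) := by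
      intro t ht
      constructor
      · rintro ⟨m, hm⟩
        have h1 : m + 1 ≤ q m := by omega
        have h2 : m < durfee q := (durfee_lt_iff hq m).2 h1
        have h3 := hDD m h2
        exact ⟨m, by omega⟩
      · rintro ⟨m, hm⟩
        have h1 : m + 1 ≤ pconj q m := by omega
        have h2 : m < durfee (pconj q) := (durfee_lt_iff (pconj_partition hq) m).2 h1
        have h3 := hDD m (by omega)
        exact ⟨m, by omega⟩
    constructor
    · have := (Abead_pconj_iff hq 0)
      norm_num at this
      exact this.2 hA1
    · intro r
      have h1 : Abead (pconj q) (-(r : ℤ) - 1) ↔ ¬ Abead q ((r : ℤ) + 2) := by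
        have h := Abead_pconj_iff hq (-(r : ℤ) - 1)
        rw [show (1 : ℤ) - (-(r : ℤ) - 1) = (r : ℤ) + 2 by ring] at h
        exact h
      have h2 : Abead q ((r : ℤ) + 2) ↔ Abead (pconj q) ((r : ℤ) + 1) := by
        have h := hequiv ((r : ℤ) + 2) (by omega)
        rw [show (r : ℤ) + 2 - 1 = (r : ℤ) + 1 by ring] at h
        exact h
      rw [h1, h2]
  · -- Backward direction
    rintro ⟨h0, hk⟩
    refine ⟨pconj p, pconj_partition hp, ?_, (pconj_pconj hp).symm⟩
    have hqq := pconj_pconj hp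
    have hdq := durfee_pconj hp
    have hAq : ∀ t : ℤ, Abead (pconj p) t ↔ ¬ Abead p (1 - t) := Abead_pconj_iff hp
    have hA1 : ¬ Abead (pconj p) 1 := by
      intro hc
      have := (hAq 1).1 hc
      norm_num at this
      exact this h0
    have hequiv : ∀ t : ℤ, 2 ≤ t → (Abead (pconj p) t ↔ Abead p (t - 1)) := by
      intro t ht
      rw [hAq t]
      have hr := hk (t - 2).toNat
      have hcast : (((t - 2).toNat : ℕ) : ℤ) = t - 2 := by omega
      rw [hcast] at hr
      have e1 : -(t - 2) - 1 = 1 - t := by ring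
      have e2 : (t - 2) + 1 = t - 1 := by ring
      rw [e1, e2] at hr
      constructor
      · intro hc
        by_contra hc2
        exact hc (hr.2 hc2)
      · intro hc hc2
        exact (hr.1 hc2) hc
    intro i hi
    rw [hqq]
    -- use the matching lemma with f i = pconj p i - i  and  g i = p i - i + 1
    have hfanti : StrictAnti (fun m : ℕ => ((pconj p m : ℤ) - m)) := by
      intro a b hab
      have h1 : pconj p b ≤ pconj p a := (pconj_partition hp).1 hab.le
      have h2 : (pconj p b : ℤ) ≤ (pconj p a : ℤ) := by exact_mod_cast h1
      simp only
      omega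
    have hganti : StrictAnti (fun m : ℕ => ((p m : ℤ) - m + 1)) := by
      intro a b hab
      have h1 : p b ≤ p a := hp.1 hab.le
      have h2 : (p b : ℤ) ≤ (p a : ℤ) := by exact_mod_cast h1
      simp only
      omega
    set d := durfee p with hd
    have hmain := match_aux hfanti hganti d ?_ ?_
    · have := hmain i (by omega)
      omega
    · -- h1 : every positive bead of pconj p below d matches
      intro i' hi'
      have hq1 : i' + 1 ≤ pconj p i' := (durfee_lt_iff (pconj_partition hp) i').1 (by omega)
      have hge2 : 2 ≤ (pconj p i' : ℤ) - i' := by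
        rcases lt_or_ge ((pconj p i' : ℤ) - i') 2 with hlt | hge
        · exfalso
          have h1 : (pconj p i' : ℤ) - i' = 1 := by omega
          exact hA1 ⟨i', h1⟩
        · exact hge
      have hb : Abead p ((pconj p i' : ℤ) - i' - 1) :=
        (hequiv _ hge2).1 ⟨i', rfl⟩
      obtain ⟨m, hm⟩ := hb
      have hm1 : m + 1 ≤ p m := by omega
      have hmd : m < d := (durfee_lt_iff hp m).2 hm1
      exact ⟨m, hmd, by omega⟩
    · -- h2
      intro j hj
      have hp1 : j + 1 ≤ p j := (durfee_lt_iff hp j).1 (by omega)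
      have hge2 : 2 ≤ (p j : ℤ) - j + 1 := by omega
      have hb : Abead (pconj p) ((p j : ℤ) - j + 1) :=
        (hequiv _ hge2).2 ⟨j, by ring_nf⟩
      obtain ⟨m, hm⟩ := hb
      have hm1 : m + 1 ≤ pconj p m := by omega
      have hmd : m < durfee (pconj p) := (durfee_lt_iff (pconj_partition hp) m).2 hm1
      exact ⟨m, by omega, by omega⟩
end

section
/- Let λ̄ = (λ̄_1 > … > λ̄_ℓ) be a distinct partition. Let (c_k)_{k∈ℤ} = ψ(λ̄λ̄) be the binary word of its doubled distinct partition, (c^tr_k)_{k∈ℤ} = ψ((λ̄λ̄)^tr) that of the conjugate, and (c^s_k)_{k∈ℤ} = ψ(μ) that of the self-conjugate partition μ associated to λ̄. Then: {k ∈ ℕ : c_k = 0} = {λ̄_1,…,λ̄_ℓ}, {k ∈ ℕ : c^tr_k = 0} = {λ̄_1 − 1,…,λ̄_ℓ − 1}, and {k ∈ ℕ : c^s_k = 0} = {λ̄_1 − 1,…,λ̄_ℓ − 1}. -/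
open scoped Classical

lemma zidw_downset_card {S : Set ℕ} (hfin : S.Finite)
    (hdown : ∀ ⦃i j : ℕ⦄, i ≤ j → j ∈ S → i ∈ S) (k : ℕ) :
    k < Nat.card S ↔ k ∈ S := by
  rw [Nat.card_coe_set_eq]
  constructor
  · intro hk
    by_contra hm
    have hsub : S ⊆ Set.Iio k := fun j hj =>
      lt_of_not_ge fun h => hm (hdown h hj)
    have h2 := Set.ncard_le_ncard hsub (Set.finite_Iio k)
    rw [← Finset.coe_Iio, Set.ncard_coe_finset, Nat.card_Iio] at h2
    omega
  · intro hk
    have hsub : Set.Iic k ⊆ S := fun j hj => hdown hj hk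
    have h2 := Set.ncard_le_ncard hsub hfin
    rw [← Finset.coe_Iic, Set.ncard_coe_finset, Nat.card_Iic] at h2
    omega

lemma zidw_plen_iff (b : ℕ → ℕ) (hb : IsPartition b) (i : ℕ) :
    i < plen b ↔ b i ≠ 0 := by
  obtain ⟨hmono, N, hN⟩ := hb
  have hfin : {i : ℕ | b i ≠ 0}.Finite := by
    apply Set.Finite.subset (Set.finite_Iio N)
    intro j hj
    by_contra h
    exact hj (hN j (le_of_not_gt h))
  exact zidw_downset_card hfin (fun i j hij hj => fun h0 => hj (Nat.le_zero.mp (h0 ▸ hmono hij))) i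

lemma zidw_pconj_iff (p : ℕ → ℕ) (hp : IsPartition p) (j i : ℕ) :
    i < pconj p j ↔ j + 1 ≤ p i := by
  obtain ⟨hmono, N, hN⟩ := hp
  have hfin : {i : ℕ | j + 1 ≤ p i}.Finite := by
    apply Set.Finite.subset (Set.finite_Iio N)
    intro m hm
    by_contra h
    have := hN m (le_of_not_gt h)
    simp only [Set.mem_setOf_eq, this] at hm
    omega
  exact zidw_downset_card hfin (fun a c hac hc => le_trans hc (hmono hac)) i

lemma zidw_strict_part (b : ℕ → ℕ) (hb : IsPartition b) (hd : IsDistinct b) :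
    ∀ i j, i ≤ j → j < plen b → b j + (j - i) ≤ b i := by
  intro i j hij hj
  induction j with
  | zero => simpa using (Nat.le_zero.mp hij) ▸ le_refl _
  | succ n ih =>
    rcases Nat.eq_or_lt_of_le hij with h | h
    · simp [← h]
    · have hn : n < plen b := lt_trans (Nat.lt_succ_self n) hj
      have hbn : b (n+1) ≠ 0 := ((zidw_plen_iff b hb (n+1)).mp hj)
      have hlt := hd n hbn
      have := ih (Nat.lt_succ_iff.mp h) hn
      omega

noncomputable def zidw_cval (b : ℕ → ℕ) (m : ℕ) : ℕ :=
  Nat.card {j : ℕ // j < plen b ∧ m + 1 ≤ b j + j}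

lemma zidw_weak_part (b : ℕ → ℕ) (hb : IsPartition b) (hd : IsDistinct b) :
    ∀ i j, i ≤ j → j < plen b → b j + j ≤ b i + i := by
  intro i j hij hj
  have := zidw_strict_part b hb hd i j hij hj
  omega

lemma zidw_cval_iff (b : ℕ → ℕ) (hb : IsPartition b) (hd : IsDistinct b) (m j : ℕ) :
    j < zidw_cval b m ↔ (j < plen b ∧ m + 1 ≤ b j + j) := by
  have hfin : {j : ℕ | j < plen b ∧ m + 1 ≤ b j + j}.Finite :=
    Set.Finite.subset (Set.finite_Iio (plen b)) (fun j hj => hj.1)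
  exact zidw_downset_card hfin (fun i j hij hj =>
    ⟨lt_of_le_of_lt hij hj.1, le_trans hj.2 (zidw_weak_part b hb hd i j hij hj.1)⟩) j

lemma zidw_cval_le (b : ℕ → ℕ) (hb : IsPartition b) (hd : IsDistinct b) (m : ℕ) :
    zidw_cval b m ≤ plen b := by
  by_contra h
  exact absurd ((zidw_cval_iff b hb hd m (plen b)).mp (lt_of_not_ge h)).1 (lt_irrefl _)

lemma zidw_double_lt (b : ℕ → ℕ) (i : ℕ) (h : i < plen b) : double b i = b i + (i + 1) :=
  if_pos h

lemma zidw_double_ge (b : ℕ → ℕ) (i : ℕ) (h : ¬ i < plen b) : double b i = zidw_cval b i :=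
  if_neg h

lemma zidw_double_partition (b : ℕ → ℕ) (hb : IsPartition b) (hd : IsDistinct b) :
    IsPartition (double b) := by
  constructor
  · apply antitone_nat_of_succ_le
    intro i
    by_cases h1 : i + 1 < plen b
    · have h0 : i < plen b := lt_trans (Nat.lt_succ_self i) h1
      rw [zidw_double_lt b _ h1, zidw_double_lt b _ h0]
      have := zidw_strict_part b hb hd i (i+1) (Nat.le_succ i) h1
      omega
    · rw [zidw_double_ge b _ h1]
      by_cases h0 : i < plen b
      · rw [zidw_double_lt b _ h0]
        have := zidw_cval_le b hb hd (i+1)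
        omega
      · rw [zidw_double_ge b _ h0]
        by_contra h
        have h2 := (zidw_cval_iff b hb hd (i+1) (zidw_cval b i)).mp (lt_of_not_ge h)
        have h3 := (zidw_cval_iff b hb hd i (zidw_cval b i)).mpr ⟨h2.1, by omega⟩
        omega
  · refine ⟨plen b + b 0, fun i hi => ?_⟩
    have h1 : ¬ i < plen b := by omega
    rw [zidw_double_ge b _ h1]
    by_contra h
    have h2 := (zidw_cval_iff b hb hd i 0).mp (Nat.pos_of_ne_zero h)
    have h3 := hb.1 (Nat.zero_le 0)
    omega

lemma zidw_word_eq_zero (p : ℕ → ℕ) (k : ℤ) :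
    word p k = 0 ↔ ∃ m : ℕ, k = (p m : ℤ) - ((m : ℤ) + 1) := by
  unfold word; split <;> simp_all

lemma zidw_dual (p : ℕ → ℕ) (hp : IsPartition p) (k : ℤ) :
    (∃ j : ℕ, k = (pconj p j : ℤ) - ((j : ℤ) + 1)) ↔
      ¬ ∃ m : ℕ, -(k + 1) = (p m : ℤ) - ((m : ℤ) + 1) := by
  constructor
  · rintro ⟨j, hj⟩ ⟨m, hm⟩
    by_cases h : j + 1 ≤ p m
    · have h1 : m < pconj p j := (zidw_pconj_iff p hp j m).mpr h
      omega
    · have h1 : ¬ m < pconj p j := fun hh => h ((zidw_pconj_iff p hp j m).mp hh)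
      omega
  · intro hne
    obtain ⟨hmono, N, hN⟩ := hp
    set h : ℤ := -(k + 1) with hh
    have hne' : ∀ m : ℕ, h ≠ (p m : ℤ) - ((m : ℤ) + 1) := by
      intro m hm; exact hne ⟨m, hm⟩
    set S : Set ℕ := {m : ℕ | h < (p m : ℤ) - ((m : ℤ) + 1)} with hS
    have hfin : S.Finite := by
      apply Set.Finite.subset (Set.finite_Iio (N + k.toNat + 1))
      intro m hm
      simp only [hS, Set.mem_setOf_eq] at hm
      simp only [Set.mem_Iio]
      by_contra hc
      push_neg at hc
      have h1 : p m = 0 := hN m (by omega)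
      have h3 : k ≤ (k.toNat : ℤ) := Int.self_le_toNat k
      rw [h1] at hm
      simp only [Nat.cast_zero] at hm
      omega
    have hdown : ∀ ⦃i j : ℕ⦄, i ≤ j → j ∈ S → i ∈ S := by
      intro i j hij hj
      simp only [hS, Set.mem_setOf_eq] at hj ⊢
      have : p j ≤ p i := hmono hij
      omega
    set j : ℕ := Nat.card S with hj
    have hiff : ∀ m : ℕ, m < j ↔ h < (p m : ℤ) - ((m : ℤ) + 1) :=
      fun m => zidw_downset_card hfin hdown m
    have hjpos : 0 ≤ h + j := by
      rcases le_or_gt 0 h with h0 | h0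
      · omega
      · set s : ℕ := (-h - 1).toNat with hs
        have hs' : (s : ℤ) = -h - 1 := Int.toNat_of_nonneg (by omega)
        have : s < j := by
          rw [hiff s]
          have h1 : (0 : ℤ) ≤ p s := Int.ofNat_nonneg _
          have h2 := hne' s
          omega
        omega
    set t : ℕ := (h + j).toNat with ht
    have ht' : (t : ℤ) = h + j := Int.toNat_of_nonneg hjpos
    have hup : ∀ i : ℕ, i < j → t + 1 ≤ p i := by
      intro i hi
      have hj1 : j - 1 < j := by omega
      have h1 : h < (p (j-1) : ℤ) - ((j-1 : ℕ) : ℤ) - 1 := by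
        have := (hiff (j-1)).mp hj1; omega
      have h2 : p (j-1) ≤ p i := hmono (by omega)
      have h3 : ((j - 1 : ℕ) : ℤ) = (j : ℤ) - 1 := by omega
      omega
    have hdn : ∀ i : ℕ, j ≤ i → p i ≤ t := by
      intro i hi
      have h1 : ¬ h < (p i : ℤ) - ((i : ℤ) + 1) := fun hc => absurd hc (by rw [← hiff i] at hc ⊢; omega)
      have h1' : ¬ h < (p i : ℤ) - ((i : ℤ) + 1) := by
        intro hc; have := (hiff i).mpr hc; omega
      have h2 := hne' i
      have h3 : p j ≤ p i → True := fun _ => trivial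
      have h4 : p i ≤ p j := hmono hi
      have h5 : ¬ h < (p j : ℤ) - ((j : ℤ) + 1) := by
        intro hc; have := (hiff j).mpr hc; omega
      have h6 := hne' j
      omega
    have hpc : pconj p t = j := by
      have hgal := zidw_pconj_iff p ⟨hmono, N, hN⟩ t
      have hle : pconj p t ≤ j := by
        by_contra hc
        have h1 : j < pconj p t := lt_of_not_ge hc
        have h2 := (hgal j).mp h1
        have := hdn j le_rfl
        omega
      have hge : j ≤ pconj p t := by
        by_contra hc
        have h1 : pconj p t < j := lt_of_not_ge hc
        have h2 := hup _ h1
        have := (hgal (pconj p t)).mpr h2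
        omega
      omega
    exact ⟨t, by rw [hpc]; omega⟩

lemma zidw_pconj_le_plen (b : ℕ → ℕ) (hb : IsPartition b) (n : ℕ) : pconj b n ≤ plen b := by
  by_contra h
  have h1 := (zidw_pconj_iff b hb n (plen b)).mp (lt_of_not_ge h)
  have h2 : b (plen b) = 0 := by
    by_contra h2
    exact absurd ((zidw_plen_iff b hb (plen b)).mpr h2) (lt_irrefl _)
  omega

lemma zidw_comb (b : ℕ → ℕ) (hb : IsPartition b) (hd : IsDistinct b) (n : ℕ) (hn : 1 ≤ n) :
    (∃ m : ℕ, plen b ≤ m ∧ m + 1 - zidw_cval b m = n) ↔ ¬ ∃ i < plen b, b i = n := by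
  constructor
  · rintro ⟨m, hm, hmn⟩ ⟨i, hi, hbi⟩
    have hcle : zidw_cval b m ≤ plen b := zidw_cval_le b hb hd m
    have hic : i < zidw_cval b m := by
      by_contra hc
      push_neg at hc
      have h1 : zidw_cval b m < plen b := lt_of_le_of_lt hc hi
      have h2 := zidw_strict_part b hb hd (zidw_cval b m) i hc hi
      have h3 := (zidw_cval_iff b hb hd m (zidw_cval b m)).mpr ⟨h1, by omega⟩
      omega
    have hj : zidw_cval b m - 1 < zidw_cval b m := by omega
    have h3 := (zidw_cval_iff b hb hd m (zidw_cval b m - 1)).mp hj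
    have h4 := zidw_strict_part b hb hd i (zidw_cval b m - 1) (by omega) h3.1
    omega
  · intro hniB
    set L := plen b with hL
    set t := pconj b n with hti
    have htL : t ≤ L := zidw_pconj_le_plen b hb n
    have hgal : ∀ j, j < t ↔ n + 1 ≤ b j := fun j => zidw_pconj_iff b hb n j
    have hne : ∀ j, j < L → b j ≠ n := by
      intro j hj hc; exact hniB ⟨j, hj, hc⟩
    set m := n + t - 1 with hmdef
    have hset : ∀ j, (j < L ∧ m + 1 ≤ b j + j) ↔ j < t := by
      intro j
      constructor
      · rintro ⟨hjL, hjm⟩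
        by_contra hc
        push_neg at hc
        have h1 : ¬ (n + 1 ≤ b j) := fun hh => absurd ((hgal j).mpr hh) (by omega)
        have h2 : ¬ (n + 1 ≤ b t) := by
          intro hh
          exact absurd ((hgal t).mpr hh) (lt_irrefl _)
        have h3 : b t ≠ n := hne t (lt_of_le_of_lt hc hjL)
        have h4 := zidw_strict_part b hb hd t j hc hjL
        have h5 := hne j hjL
        omega
      · intro hjt
        have hjL : j < L := lt_of_lt_of_le hjt htL
        have ht1 : t - 1 < L := by omega
        have h1 : n + 1 ≤ b (t - 1) := (hgal (t-1)).mp (by omega)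
        have h2 := zidw_strict_part b hb hd j (t - 1) (by omega) ht1
        exact ⟨hjL, by omega⟩
    have hcv : zidw_cval b m = t := by
      have hle : zidw_cval b m ≤ t := by
        by_contra hc
        push_neg at hc
        have := (hset t).mp ((zidw_cval_iff b hb hd m t).mp hc)
        omega
      have hge : t ≤ zidw_cval b m := by
        by_contra hc
        push_neg at hc
        have := (zidw_cval_iff b hb hd m (zidw_cval b m)).mpr ((hset (zidw_cval b m)).mpr hc)
        omega
      omega
    have hLm : L ≤ m := by
      rcases le_or_gt L t with h | h
      · omega
      · have h1 : ¬ (n + 1 ≤ b t) := fun hh => absurd ((hgal t).mpr hh) (lt_irrefl _)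
        have h2 : b t ≠ n := hne t h
        have h3 := zidw_strict_part b hb hd t (L - 1) (by omega) (by omega)
        have h4 : b (L - 1) ≠ 0 := (zidw_plen_iff b hb (L-1)).mp (by omega)
        omega
    exact ⟨m, hLm, by omega⟩

lemma zidw_scOf_lt (b : ℕ → ℕ) (i : ℕ) (h : i < plen b) : scOf b i = b i + i :=
  if_pos h

lemma zidw_scOf_ge (b : ℕ → ℕ) (i : ℕ) (h : ¬ i < plen b) : scOf b i = zidw_cval b i :=
  if_neg h

/-- For a distinct partition `λ̄ = (λ̄_1 > … > λ̄_ℓ)`, the nonnegative indices of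
the letters `0` in the word of the doubled distinct partition `λ̄λ̄` are exactly
the parts `λ̄_i`; those in the word of `(λ̄λ̄)^tr` and in the word of the
self-conjugate partition `μ` associated with `λ̄` are exactly the `λ̄_i - 1`. -/
theorem zero_indices_of_doubled_words (b : ℕ → ℕ) (hb : IsPartition b) (hd : IsDistinct b) :
    {k : ℕ | word (double b) (k : ℤ) = 0} = {m : ℕ | ∃ i < plen b, b i = m} ∧
    {k : ℕ | word (pconj (double b)) (k : ℤ) = 0} = {m : ℕ | ∃ i < plen b, b i - 1 = m} ∧
    {k : ℕ | word (scOf b) (k : ℤ) = 0} = {m : ℕ | ∃ i < plen b, b i - 1 = m} := by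
  refine ⟨?_, ?_, ?_⟩
  · ext k
    simp only [Set.mem_setOf_eq, zidw_word_eq_zero]
    constructor
    · rintro ⟨m, hm⟩
      by_cases h : m < plen b
      · rw [zidw_double_lt b m h] at hm
        exact ⟨m, h, by push_cast at hm; omega⟩
      · rw [zidw_double_ge b m h] at hm
        have h1 := zidw_cval_le b hb hd m
        exfalso
        omega
    · rintro ⟨i, hi, hbi⟩
      refine ⟨i, ?_⟩
      rw [zidw_double_lt b i hi]
      push_cast
      omega
  · ext k
    simp only [Set.mem_setOf_eq, zidw_word_eq_zero]
    rw [zidw_dual (double b) (zidw_double_partition b hb hd) (k : ℤ)]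
    have key : (∃ m : ℕ, -((k : ℤ) + 1) = (double b m : ℤ) - ((m : ℤ) + 1)) ↔
        (∃ m : ℕ, plen b ≤ m ∧ m + 1 - zidw_cval b m = k + 1) := by
      constructor
      · rintro ⟨m, hm⟩
        by_cases h : m < plen b
        · rw [zidw_double_lt b m h] at hm
          exfalso
          push_cast at hm
          omega
        · rw [zidw_double_ge b m h] at hm
          have h1 := zidw_cval_le b hb hd m
          exact ⟨m, by omega, by omega⟩
      · rintro ⟨m, hm, hc⟩
        refine ⟨m, ?_⟩
        have h : ¬ m < plen b := by omega
        rw [zidw_double_ge b m h]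
        have h1 := zidw_cval_le b hb hd m
        omega
    rw [key, zidw_comb b hb hd (k + 1) (by omega), not_not]
    constructor
    · rintro ⟨i, hi, h⟩
      exact ⟨i, hi, by omega⟩
    · rintro ⟨i, hi, h⟩
      have h2 := (zidw_plen_iff b hb i).mp hi
      exact ⟨i, hi, by omega⟩
  · ext k
    simp only [Set.mem_setOf_eq, zidw_word_eq_zero]
    constructor
    · rintro ⟨m, hm⟩
      by_cases h : m < plen b
      · rw [zidw_scOf_lt b m h] at hm
        have h2 := (zidw_plen_iff b hb m).mp h
        exact ⟨m, h, by push_cast at hm; omega⟩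
      · rw [zidw_scOf_ge b m h] at hm
        have h1 := zidw_cval_le b hb hd m
        exfalso
        omega
    · rintro ⟨i, hi, hbi⟩
      refine ⟨i, ?_⟩
      rw [zidw_scOf_lt b i hi]
      have h2 := (zidw_plen_iff b hb i).mp hi
      push_cast
      omega
end
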